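/- Let ν ∈ Λ with (ν,e₁) = (ν,e₂) = 0, let a₁, a₂ ∈ ℤ, and set ξ := a₁e₁ + a₂e₂ + ν. Assume (ξ,ξ) = −2. Then (r_ζ ∘ r_ξ ∘ r_ζ(e₁), e₁) = −(2/25)·(18a₁² − 48a₁a₂ + 32a₂² − 25) and (r_ζ ∘ r_ξ ∘ r_ζ(e₁), e₂) = (2/25)·(24a₁² − 14a₁a₂ − 24a₂²); moreover 18a₁² − 48a₁a₂ + 32a₂² = 2(3a₁ − 4a₂)². -/
import Mathlib


/-- The involution `r_γ(x) = −x + (2(x,γ)/(γ,γ))·γ` of a rational quadratic space, with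
`(+1)`-eigenspace `ℚγ` and `(−1)`-eigenspace `γ^⊥`. -/
noncomputable def reflAlong {V : Type*} [AddCommGroup V] [Module ℚ V]
    (B : V →ₗ[ℚ] V →ₗ[ℚ] ℚ) (γ : V) (x : V) : V :=
  -x + ((2 * B x γ) / B γ γ) • γ

/-- with `e₁, e₂` of square `−2`, orthogonal, `ζ = e₁ + 2e₂`,
`ξ = a₁e₁ + a₂e₂ + ν` (`ν ⊥ e₁, e₂`) of square `−2`, one has
`(r_ζ∘r_ξ∘r_ζ(e₁), e₁) = −(2/25)(18a₁² − 48a₁a₂ + 32a₂² − 25)`,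
`(r_ζ∘r_ξ∘r_ζ(e₁), e₂) = (2/25)(24a₁² − 14a₁a₂ − 24a₂²)`, and
`18a₁² − 48a₁a₂ + 32a₂² = 2(3a₁ − 4a₂)²`. -/
theorem refl_conj_values
    (V : Type*) [AddCommGroup V] [Module ℚ V]
    (B : V →ₗ[ℚ] V →ₗ[ℚ] ℚ) (hsymm : ∀ x y : V, B x y = B y x)
    (L : Submodule ℤ V) [Module.Free ℤ (↥L)] [Module.Finite ℤ (↥L)]
    (hint : ∀ x ∈ L, ∀ y ∈ L, ∃ n : ℤ, B x y = (n : ℚ))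
    (e₁ e₂ ν : V) (he₁ : e₁ ∈ L) (he₂ : e₂ ∈ L) (hν : ν ∈ L)
    (h11 : B e₁ e₁ = -2) (h22 : B e₂ e₂ = -2) (h12 : B e₁ e₂ = 0)
    (hν1 : B ν e₁ = 0) (hν2 : B ν e₂ = 0)
    (a₁ a₂ : ℤ) (ξ ζ : V)
    (hξ : ξ = (a₁ : ℚ) • e₁ + (a₂ : ℚ) • e₂ + ν)
    (hξξ : B ξ ξ = -2)
    (hζ : ζ = e₁ + (2 : ℚ) • e₂) :
    B (reflAlong B ζ (reflAlong B ξ (reflAlong B ζ e₁))) e₁ =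
      -(2 / 25) * ((18 * a₁ ^ 2 - 48 * a₁ * a₂ + 32 * a₂ ^ 2 - 25 : ℤ) : ℚ) ∧
    B (reflAlong B ζ (reflAlong B ξ (reflAlong B ζ e₁))) e₂ =
      (2 / 25) * ((24 * a₁ ^ 2 - 14 * a₁ * a₂ - 24 * a₂ ^ 2 : ℤ) : ℚ) ∧
    (18 * a₁ ^ 2 - 48 * a₁ * a₂ + 32 * a₂ ^ 2 : ℤ) = 2 * (3 * a₁ - 4 * a₂) ^ 2 := by

  have h21 : B e₂ e₁ = 0 := by rw [hsymm]; exact h12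
  have h1ν : B e₁ ν = 0 := by rw [hsymm]; exact hν1
  have h2ν : B e₂ ν = 0 := by rw [hsymm]; exact hν2
  have hνν : B ν ν = 2 * (a₁:ℚ) ^ 2 + 2 * (a₂:ℚ) ^ 2 - 2 := by
    have h := hξξ
    rw [hξ] at h
    simp only [map_add, map_smul, LinearMap.add_apply, LinearMap.smul_apply, smul_eq_mul,
      h11, h22, h12, h21, hν1, hν2, h1ν, h2ν] at h
    ring_nf at h ⊢
    linarith
  refine ⟨?_, ?_, by ring⟩ <;>
  · simp only [reflAlong, hξ, hζ, map_add, map_smul, map_neg, smul_add, smul_neg, smul_smul,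
      LinearMap.add_apply, LinearMap.smul_apply, LinearMap.neg_apply, smul_eq_mul,
      h11, h22, h12, h21, hν1, hν2, h1ν, h2ν, hνν]
    push_cast
    ring_nf
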